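/- Suppose x(t+1) = Σ_{i=0}^{d} F_i(t) x^{[i]}(t) where the random matrices F(t) = [F_0(t),…,F_d(t)] are mutually independent across t, identically distributed, and independent of the random initial state x₀. Then the moments satisfy the deterministic recursion E[x^{[j]}(t+1)] = Σ_{k=0}^{jd} E_{j,k} E[x^{[k]}(t)], where E_{j,k} = E[ Σ_{(i_1,…,i_j) ∈ H_{j,k}} F_{i_1}(t) ⊗ ⋯ ⊗ F_{i_j}(t) ] (independent of t). -/

import Mathlib

open MeasureTheory ProbabilityTheory

/-- `k`-th Kronecker power of a vector `x ∈ ℝ^n`, indexed by multi-indices. -/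
def vecPow {n : ℕ} (x : Fin n → ℝ) (k : ℕ) : (Fin k → Fin n) → ℝ :=
  fun b => ∏ l, x (b l)

def sigmaIdx {j k : ℕ} (idx : Fin j → ℕ) (h : (∑ l, idx l) = k) (l : Fin j)
    (m2 : Fin (idx l)) : Fin k :=
  ⟨(∑ l' ∈ Finset.univ.filter (fun l' => l' < l), idx l') + (m2 : ℕ), by
    have h1 : (m2 : ℕ) < idx l := m2.isLt
    have h2 : idx l + ∑ l' ∈ Finset.univ.filter (fun l' => l' < l), idx l' ≤ ∑ l', idx l' := by
      rw [← Finset.sum_insert (by simp)]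
      exact Finset.sum_le_sum_of_subset (Finset.subset_univ _)
    omega⟩

/-- The type of a tuple `(F_0, …, F_d)` of coefficient matrices, `F_i ∈ ℝ^{n × n^i}`,
given entrywise. -/
abbrev CoefTuple (n d : ℕ) : Type :=
  (i : Fin (d+1)) → Fin n → (Fin (i : ℕ) → Fin n) → ℝ

/-- Entry `(a, b)` of the matrix `A_{j,k} = Σ_{(i_1,…,i_j) ∈ H_{j,k}} F_{i_1} ⊗ ⋯ ⊗ F_{i_j}`. -/
def AmatE {n d : ℕ} (F : CoefTuple n d) (j k : ℕ)
    (a : Fin j → Fin n) (b : Fin k → Fin n) : ℝ :=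
  ∑ idx : Fin j → Fin (d+1),
    if h : (∑ l, ((idx l : ℕ))) = k then
      ∏ l, F (idx l) (a l) (fun m2 => b (sigmaIdx (fun l' => ((idx l' : ℕ))) h l m2))
    else 0

/-- The family consisting of the initial state `x₀` and the coefficient tuples `F(t)`,
indexed by `Option ℕ` (`none ↦ x₀`, `some t ↦ F(t)`). -/
def fam {Ω : Type*} {n d : ℕ} (x0 : Ω → Fin n → ℝ) (F : ℕ → Ω → CoefTuple n d) :
    (o : Option ℕ) → Ω → (Option.elim o (Fin n → ℝ) (fun _ => CoefTuple n d)) :=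
  fun o => match o with
  | none => x0
  | some t => F t

/-- The entrywise product measurable-space structure on each member of the family. -/
def famInst (n d : ℕ) :
    (o : Option ℕ) → MeasurableSpace (Option.elim o (Fin n → ℝ) (fun _ => CoefTuple n d))
  | none => (inferInstance : MeasurableSpace (Fin n → ℝ))
  | some _ => (inferInstance : MeasurableSpace (CoefTuple n d))

/-! ### Auxiliary lemmas -/

section aux

lemma sIdx_mono {j : ℕ} (idx : Fin j → ℕ) {l l' : Fin j} (h : l < l') :
    (∑ z ∈ Finset.univ.filter (fun z => z < l), idx z) + idx l ≤
      ∑ z ∈ Finset.univ.filter (fun z => z < l'), idx z := by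
  have hsub : insert l (Finset.univ.filter (fun z => z < l)) ⊆
      Finset.univ.filter (fun z => z < l') := by
    intro z hz
    simp only [Finset.mem_insert, Finset.mem_filter, Finset.mem_univ, true_and] at hz ⊢
    rcases hz with rfl | hz
    · exact h
    · exact hz.trans h
  calc (∑ z ∈ Finset.univ.filter (fun z => z < l), idx z) + idx l
      = ∑ z ∈ insert l (Finset.univ.filter (fun z => z < l)), idx z := by
        rw [Finset.sum_insert (by simp), add_comm]
    _ ≤ _ := Finset.sum_le_sum_of_subset hsub

lemma sigmaIdx_bijective {j k : ℕ} (idx : Fin j → ℕ) (h : (∑ l, idx l) = k) :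
    Function.Bijective (fun p : Σ l : Fin j, Fin (idx l) => sigmaIdx idx h p.1 p.2) := by
  rw [Fintype.bijective_iff_injective_and_card]
  constructor
  · rintro ⟨l, m2⟩ ⟨l', m2'⟩ heq
    have hv : (∑ z ∈ Finset.univ.filter (fun z => z < l), idx z) + (m2 : ℕ) =
        (∑ z ∈ Finset.univ.filter (fun z => z < l'), idx z) + (m2' : ℕ) :=
      congrArg Fin.val heq
    rcases lt_trichotomy l l' with hl | hl | hl
    · have h1 := sIdx_mono idx hl
      have h2 : (m2 : ℕ) < idx l := m2.isLt
      omega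
    · subst hl
      have : (m2 : ℕ) = (m2' : ℕ) := by omega
      exact congrArg (Sigma.mk l) (Fin.ext this)
    · have h1 := sIdx_mono idx hl
      have h2 : (m2' : ℕ) < idx l' := m2'.isLt
      omega
  · simp [Fintype.card_sigma, h]

noncomputable def restrEquiv {n j k : ℕ} (idx : Fin j → ℕ) (h : (∑ l, idx l) = k) :
    (Fin k → Fin n) ≃ ((l : Fin j) → Fin (idx l) → Fin n) :=
  (Equiv.arrowCongr (Equiv.ofBijective _ (sigmaIdx_bijective idx h)).symm
    (Equiv.refl (Fin n))).trans (Equiv.piCurry fun _ _ => Fin n)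

lemma restrEquiv_apply {n j k : ℕ} (idx : Fin j → ℕ) (h : (∑ l, idx l) = k)
    (b : Fin k → Fin n) (l : Fin j) (m2 : Fin (idx l)) :
    restrEquiv idx h b l m2 = b (sigmaIdx idx h l m2) := by
  simp [restrEquiv, Equiv.piCurry, Sigma.curry, Equiv.arrowCongr]

lemma vecPow_restr {n j k : ℕ} (idx : Fin j → ℕ) (h : (∑ l, idx l) = k)
    (y : Fin n → ℝ) (b : Fin k → Fin n) :
    vecPow y k b = ∏ l, vecPow y (idx l) (restrEquiv idx h b l) := by
  unfold vecPow
  rw [← Function.Bijective.prod_comp (sigmaIdx_bijective idx h) (fun p => y (b p))]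
  rw [← Finset.univ_sigma_univ, Finset.prod_sigma]
  exact Finset.prod_congr rfl fun l _ => Finset.prod_congr rfl fun m2 _ => by
    rw [restrEquiv_apply]

lemma key_idx {n d j : ℕ} (c : CoefTuple n d) (y : Fin n → ℝ) (a : Fin j → Fin n)
    (idx : Fin j → Fin (d+1)) :
    (∑ k ∈ Finset.range (j*d+1), ∑ b : Fin k → Fin n,
      (if h : (∑ l, ((idx l : ℕ))) = k then
        ∏ l, c (idx l) (a l) (fun m2 => b (sigmaIdx (fun l' => ((idx l' : ℕ))) h l m2))
      else 0) * vecPow y k b)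
    = ∑ B : (l : Fin j) → (Fin ((idx l : ℕ)) → Fin n),
        (∏ l, c (idx l) (a l) (B l)) * ∏ l, vecPow y ((idx l : ℕ)) (B l) := by
  have hmem : (∑ l, ((idx l : ℕ))) ∈ Finset.range (j*d+1) := by
    have h1 : (∑ l, ((idx l : ℕ))) ≤ ∑ _l : Fin j, d :=
      Finset.sum_le_sum (fun l _ => Nat.lt_succ_iff.mp (idx l).isLt)
    simp only [Finset.sum_const, Finset.card_univ, Fintype.card_fin, smul_eq_mul] at h1
    rw [Finset.mem_range]; omega
  have step : ∀ k, (∑ b : Fin k → Fin n,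
      (if h : (∑ l, ((idx l : ℕ))) = k then
        ∏ l, c (idx l) (a l) (fun m2 => b (sigmaIdx (fun l' => ((idx l' : ℕ))) h l m2))
      else 0) * vecPow y k b)
      = if h : (∑ l, ((idx l : ℕ))) = k then
          (∑ b : Fin k → Fin n,
            (∏ l, c (idx l) (a l) (fun m2 => b (sigmaIdx (fun l' => ((idx l' : ℕ))) h l m2)))
              * vecPow y k b)
        else 0 := by
    intro k
    split_ifs with h
    · simp only [dif_pos h]
    · simp [dif_neg h]
  rw [Finset.sum_congr rfl (fun k _ => step k), Finset.sum_dite_eq, if_pos hmem]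
  refine Fintype.sum_equiv (restrEquiv (fun l => ((idx l : ℕ))) rfl) _ _ (fun b => ?_)
  rw [vecPow_restr (fun l => ((idx l : ℕ))) rfl y b]
  refine congrArg₂ (· * ·) (Finset.prod_congr rfl fun l _ => ?_) rfl
  exact congrArg (c (idx l) (a l))
    (funext fun m2 => (restrEquiv_apply (fun l' => ((idx l' : ℕ))) rfl b l m2).symm)

/-- The fundamental algebraic expansion of the Kronecker power of the state update. -/
lemma expand_prod {n d : ℕ} (c : CoefTuple n d) (y z : Fin n → ℝ)
    (hz : ∀ a', z a' = ∑ i : Fin (d+1), ∑ b : Fin (i : ℕ) → Fin n, c i a' b * vecPow y (i : ℕ) b)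
    (j : ℕ) (a : Fin j → Fin n) :
    vecPow z j a = ∑ k ∈ Finset.range (j*d+1), ∑ b : Fin k → Fin n,
      AmatE c j k a b * vecPow y k b := by
  have lhs_eq : vecPow z j a = ∑ idx : Fin j → Fin (d+1),
      ∑ B : (l : Fin j) → (Fin ((idx l : ℕ)) → Fin n),
        (∏ l, c (idx l) (a l) (B l)) * ∏ l, vecPow y ((idx l : ℕ)) (B l) := by
    unfold vecPow
    calc (∏ l, z (a l))
        = ∏ l, ∑ i : Fin (d+1), ∑ b : Fin (i : ℕ) → Fin n,
            c i (a l) b * vecPow y (i : ℕ) b := Finset.prod_congr rfl fun l _ => hz (a l)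
      _ = ∑ idx : Fin j → Fin (d+1), ∏ l, ∑ b : Fin ((idx l : ℕ)) → Fin n,
            c (idx l) (a l) b * vecPow y ((idx l : ℕ)) b := Fintype.prod_sum _
      _ = _ := by
          refine Finset.sum_congr rfl fun idx _ => ?_
          rw [Fintype.prod_sum]
          exact Finset.sum_congr rfl fun B _ => Finset.prod_mul_distrib
  rw [lhs_eq]
  unfold AmatE
  calc ∑ idx : Fin j → Fin (d+1), ∑ B : (l : Fin j) → (Fin ((idx l : ℕ)) → Fin n),
        (∏ l, c (idx l) (a l) (B l)) * ∏ l, vecPow y ((idx l : ℕ)) (B l)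
      = ∑ idx : Fin j → Fin (d+1), ∑ k ∈ Finset.range (j*d+1), ∑ b : Fin k → Fin n,
          (if h : (∑ l, ((idx l : ℕ))) = k then
            ∏ l, c (idx l) (a l) (fun m2 => b (sigmaIdx (fun l' => ((idx l' : ℕ))) h l m2))
          else 0) * vecPow y k b :=
        Finset.sum_congr rfl fun idx _ => (key_idx c y a idx).symm
    _ = _ := by
        rw [Finset.sum_comm]
        refine Finset.sum_congr rfl fun k _ => ?_
        rw [Finset.sum_comm]
        refine Finset.sum_congr rfl fun b _ => ?_
        rw [Finset.sum_mul]

end aux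

section meas

variable {Ω : Type*} [MeasurableSpace Ω] {μ : Measure Ω} {n d : ℕ}

local instance coordMS (o : Option ℕ) :
    MeasurableSpace (Option.elim o (Fin n → ℝ) (fun _ => CoefTuple n d)) := famInst n d o

lemma measurable_vecPow (k : ℕ) (b : Fin k → Fin n) :
    Measurable (fun y : Fin n → ℝ => vecPow y k b) :=
  Finset.measurable_prod _ fun l _ => measurable_pi_apply (b l)

lemma measurable_AmatE {d : ℕ} (j k : ℕ) (a : Fin j → Fin n) (b : Fin k → Fin n) :
    Measurable (fun c : CoefTuple n d => AmatE c j k a b) := by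
  unfold AmatE
  refine Finset.measurable_sum _ fun idx _ => ?_
  split_ifs with h
  · refine Finset.measurable_prod _ fun l _ => ?_
    exact (measurable_pi_apply _).comp ((measurable_pi_apply (a l)).comp
      (measurable_pi_apply (idx l)))
  · exact measurable_const

/-- Index set of random sources determining `x t`. -/
def Sfin (t : ℕ) : Finset (Option ℕ) := insert none ((Finset.range t).image some)

lemma exists_phi (x : ℕ → Ω → Fin n → ℝ) (F : ℕ → Ω → CoefTuple n d)
    (hdyn : ∀ t ω a, x (t+1) ω a =
      ∑ i : Fin (d+1), ∑ b : Fin (i : ℕ) → Fin n, F t ω i a b * vecPow (x t ω) (i : ℕ) b)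
    (t : ℕ) :
    ∃ φ : ((i : ↥(Sfin t)) → Option.elim i.1 (Fin n → ℝ) (fun _ => CoefTuple n d)) →
      (Fin n → ℝ),
      Measurable φ ∧ ∀ ω, x t ω = φ (fun i => fam (x 0) F i.1 ω) := by
  induction t with
  | zero =>
    refine ⟨fun g => g ⟨none, by simp [Sfin]⟩, ?_, fun ω => rfl⟩
    exact measurable_pi_apply _
  | succ t ih =>
    obtain ⟨φ, hφmeas, hφ⟩ := ih
    have hsub : Sfin t ⊆ Sfin (t+1) := by
      intro z hz
      simp only [Sfin, Finset.mem_insert, Finset.mem_image, Finset.mem_range] at hz ⊢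
      rcases hz with rfl | ⟨s, hs, rfl⟩
      · exact Or.inl rfl
      · exact Or.inr ⟨s, by omega, rfl⟩
    have hmemt : some t ∈ Sfin (t+1) := by simp [Sfin]
    refine ⟨fun g => fun a => ∑ i : Fin (d+1), ∑ b : Fin (i : ℕ) → Fin n,
      (g ⟨some t, hmemt⟩ : CoefTuple n d) i a b *
        vecPow (φ (fun i => g ⟨i.1, hsub i.2⟩)) (i : ℕ) b, ?_, ?_⟩
    · have hrestr : Measurable (fun (g : (i : ↥(Sfin (t+1))) →
          Option.elim i.1 (Fin n → ℝ) (fun _ => CoefTuple n d)) (i : ↥(Sfin t)) =>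
          g (⟨i.1, hsub i.2⟩ : ↥(Sfin (t+1)))) :=
        measurable_pi_lambda _ fun i => measurable_pi_apply (⟨i.1, hsub i.2⟩ : ↥(Sfin (t+1)))
      refine measurable_pi_lambda _ fun a => ?_
      refine Finset.measurable_sum _ fun i _ => Finset.measurable_sum _ fun b _ => ?_
      refine Measurable.mul ?_ ?_
      · exact (measurable_pi_apply b).comp ((measurable_pi_apply a).comp
          ((measurable_pi_apply i).comp (measurable_pi_apply (⟨some t, hmemt⟩ : ↥(Sfin (t+1))))))
      · exact ((measurable_vecPow _ b).comp (hφmeas.comp hrestr))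
    · intro ω
      funext a
      rw [hdyn t ω a]
      refine Finset.sum_congr rfl fun i _ => Finset.sum_congr rfl fun b _ => ?_
      have h1 : φ (fun i : ↥(Sfin t) => fam (x 0) F i.1 ω) = x t ω := (hφ ω).symm
      rw [← h1]
      rfl

lemma indep_x_F (x : ℕ → Ω → Fin n → ℝ) (F : ℕ → Ω → CoefTuple n d)
    (hxmeas : ∀ t, Measurable (x t)) (hFmeas : ∀ t, Measurable (F t))
    (hdyn : ∀ t ω a, x (t+1) ω a =
      ∑ i : Fin (d+1), ∑ b : Fin (i : ℕ) → Fin n, F t ω i a b * vecPow (x t ω) (i : ℕ) b)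
    (hindep : iIndepFun (m := famInst n d) (fam (x 0) F) μ) (t : ℕ) :
    IndepFun (x t) (F t) μ := by
  have hmeas : ∀ o, Measurable (fam (x 0) F o) := by
    intro o
    cases o with
    | none => exact hxmeas 0
    | some s => exact hFmeas s
  have hST : Disjoint (Sfin t) ({some t} : Finset (Option ℕ)) := by
    rw [Finset.disjoint_singleton_right]
    simp only [Sfin, Finset.mem_insert, Finset.mem_image, Finset.mem_range]
    push_neg
    exact ⟨by simp, fun s hs h => absurd (Option.some.inj h) (by omega)⟩
  have hIF := hindep.indepFun_finset (Sfin t) {some t} hST hmeas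
  obtain ⟨φ, hφmeas, hφ⟩ := exists_phi x F hdyn t
  have hx : x t = φ ∘ (fun ω (i : ↥(Sfin t)) => fam (x 0) F i.1 ω) :=
    funext fun ω => hφ ω
  have hFt : F t = (fun g : (i : ↥({some t} : Finset (Option ℕ))) →
        Option.elim i.1 (Fin n → ℝ) (fun _ => CoefTuple n d) =>
        (g ⟨some t, Finset.mem_singleton_self _⟩ : CoefTuple n d)) ∘
      (fun ω (i : ↥({some t} : Finset (Option ℕ))) => fam (x 0) F i.1 ω) := rfl
  rw [hx, hFt]
  exact hIF.comp hφmeas (measurable_pi_apply _)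

end meas

/-- Moment propagation: if `x(t+1) = Σ_{i=0}^{d} F_i(t) x^{[i]}(t)`, where the tuples
`F(t) = (F_0(t),…,F_d(t))` are mutually independent across `t`, independent of `x₀ = x(0)`,
and identically distributed, then the moments of the state satisfy the deterministic
linear recursion `E[x^{[j]}(t+1)] = Σ_{k=0}^{jd} E_{j,k} E[x^{[k]}(t)]`, where
`E_{j,k} = E[A_{j,k}(t)]` does not depend on `t`. -/
theorem moment_recursion {Ω : Type*} [MeasurableSpace Ω]
    {μ : Measure Ω} [IsProbabilityMeasure μ] {n d : ℕ}
    (x : ℕ → Ω → Fin n → ℝ) (F : ℕ → Ω → CoefTuple n d)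
    (hxmeas : ∀ t, Measurable (x t)) (hFmeas : ∀ t, Measurable (F t))
    (hdyn : ∀ t ω a, x (t+1) ω a =
      ∑ i : Fin (d+1), ∑ b : Fin (i : ℕ) → Fin n, F t ω i a b * vecPow (x t ω) (i : ℕ) b)
    (hindep : iIndepFun (m := famInst n d) (fam (x 0) F) μ)
    (hid : ∀ t, μ.map (F t) = μ.map (F 0))
    (hxint : ∀ t k b, Integrable (fun ω => vecPow (x t ω) k b) μ)
    (hAint : ∀ t j k a b, Integrable (fun ω => AmatE (F t ω) j k a b) μ)
    (hprodint : ∀ t j k a b b', Integrable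
      (fun ω => AmatE (F t ω) j k a b * vecPow (x t ω) k b') μ) :
    (∀ t j k a b, (∫ ω, AmatE (F t ω) j k a b ∂μ) = ∫ ω, AmatE (F 0 ω) j k a b ∂μ) ∧
    (∀ t j (a : Fin j → Fin n),
      (∫ ω, vecPow (x (t+1) ω) j a ∂μ) =
        ∑ k ∈ Finset.range (j * d + 1), ∑ b : Fin k → Fin n,
          (∫ ω, AmatE (F 0 ω) j k a b ∂μ) * ∫ ω, vecPow (x t ω) k b ∂μ) := by
  have part1 : ∀ t j k a b,
      (∫ ω, AmatE (F t ω) j k a b ∂μ) = ∫ ω, AmatE (F 0 ω) j k a b ∂μ := by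
    intro t j k a b
    have hAmeas := measurable_AmatE (n := n) (d := d) j k a b
    calc (∫ ω, AmatE (F t ω) j k a b ∂μ)
        = ∫ c, AmatE c j k a b ∂(μ.map (F t)) :=
          (integral_map (hFmeas t).aemeasurable hAmeas.aestronglyMeasurable).symm
      _ = ∫ c, AmatE c j k a b ∂(μ.map (F 0)) := by rw [hid t]
      _ = ∫ ω, AmatE (F 0 ω) j k a b ∂μ :=
          integral_map (hFmeas 0).aemeasurable hAmeas.aestronglyMeasurable
  refine ⟨part1, fun t j a => ?_⟩
  have heq : (fun ω => vecPow (x (t+1) ω) j a) =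
      (fun ω => ∑ k ∈ Finset.range (j*d+1), ∑ b : Fin k → Fin n,
        AmatE (F t ω) j k a b * vecPow (x t ω) k b) :=
    funext fun ω => expand_prod (F t ω) (x t ω) (x (t+1) ω) (fun a' => hdyn t ω a') j a
  have hindepAV : ∀ k (b : Fin k → Fin n),
      IndepFun (fun ω => AmatE (F t ω) j k a b) (fun ω => vecPow (x t ω) k b) μ := by
    intro k b
    have := (indep_x_F x F hxmeas hFmeas hdyn hindep t).symm
    exact this.comp (measurable_AmatE j k a b) (measurable_vecPow k b)
  calc (∫ ω, vecPow (x (t+1) ω) j a ∂μ)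
      = ∫ ω, ∑ k ∈ Finset.range (j*d+1), ∑ b : Fin k → Fin n,
          AmatE (F t ω) j k a b * vecPow (x t ω) k b ∂μ := by rw [heq]
    _ = ∑ k ∈ Finset.range (j*d+1), ∫ ω, ∑ b : Fin k → Fin n,
          AmatE (F t ω) j k a b * vecPow (x t ω) k b ∂μ :=
        integral_finset_sum _ fun k _ => integrable_finset_sum _ fun b _ => hprodint t j k a b b
    _ = ∑ k ∈ Finset.range (j*d+1), ∑ b : Fin k → Fin n,
          ∫ ω, AmatE (F t ω) j k a b * vecPow (x t ω) k b ∂μ :=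
        Finset.sum_congr rfl fun k _ =>
          integral_finset_sum _ fun b _ => hprodint t j k a b b
    _ = ∑ k ∈ Finset.range (j*d+1), ∑ b : Fin k → Fin n,
          (∫ ω, AmatE (F 0 ω) j k a b ∂μ) * ∫ ω, vecPow (x t ω) k b ∂μ := by
        refine Finset.sum_congr rfl fun k _ => Finset.sum_congr rfl fun b _ => ?_
        rw [← part1 t j k a b]
        exact IndepFun.integral_mul_eq_mul_integral (hindepAV k b) (hAint t j k a b).aestronglyMeasurable (hxint t k b).aestronglyMeasurable
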